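/- Let F : ℝ → [0,1] be nondecreasing and right-continuous, suppose F(0) = exp(−α) for some real α > 0, and suppose that F(V − log T) = F(V)^T for every V ∈ ℝ and every positive integer T. Then F(x) = exp(−α·exp(−x)) for every x ∈ ℝ, i.e., F is the CDF of a (scaled) Gumbel distribution. (Functional-equation step concluding the proof of Proposition 2.) -/

import Mathlib

open Real Filter

/-- **Functional-equation step concluding the proof of Proposition 2.**
Let `F : ℝ → [0,1]` be nondecreasing and right-continuous with `F 0 = exp (-α)` for some
`α > 0`, and suppose `F (V - log T) = (F V) ^ T` for every `V ∈ ℝ` and every positive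
integer `T`.  Then `F x = exp (-α * exp (-x))` for every `x ∈ ℝ`, i.e. `F` is the CDF of a
(scaled) Gumbel distribution. -/
theorem gumbel_functional_equation_solution
    (F : ℝ → ℝ) (hF01 : ∀ x, F x ∈ Set.Icc (0 : ℝ) 1)
    (hmono : Monotone F)
    (hrc : ∀ x, ContinuousWithinAt F (Set.Ici x) x)
    (α : ℝ) (hα : 0 < α) (hF0 : F 0 = Real.exp (-α))
    (hfe : ∀ (V : ℝ) (T : ℕ), 0 < T → F (V - Real.log T) = F V ^ T) :
    ∀ x : ℝ, F x = Real.exp (-α * Real.exp (-x)) := by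
  have G := fun x : ℝ => Real.exp (-α * Real.exp (-x))
  -- Step 1 : value at log t
  have L1 : ∀ t : ℕ, 0 < t → F (Real.log t) = Real.exp (-α / t) := by
    intro t ht
    have h := hfe (Real.log t) t ht
    rw [sub_self] at h
    have ht' : (t : ℝ) ≠ 0 := Nat.cast_ne_zero.mpr ht.ne'
    have h2 : F (Real.log t) ^ t = Real.exp (-α / t) ^ t := by
      rw [← h, hF0, ← Real.exp_nat_mul]
      congr 1
      field_simp
    exact (pow_left_inj₀ (hF01 _).1 (Real.exp_pos _).le ht.ne') |>.mp h2
  -- Step 2 : value at log q for positive rational q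
  have L2 : ∀ q : ℚ, 0 < q → F (Real.log q) = Real.exp (-α * Real.exp (-Real.log q)) := by
    intro q hq
    have hq' : (0:ℝ) < (q:ℝ) := by exact_mod_cast hq
    have hnum : 0 < q.num := Rat.num_pos.mpr hq
    set s : ℕ := q.num.toNat with hs
    have hs0 : 0 < s := by omega
    have hqeq : (q:ℝ) = (s:ℝ) / (q.den:ℝ) := by
      rw [Rat.cast_def]
      congr 1
      exact_mod_cast (Int.toNat_of_nonneg hnum.le).symm
    have hden' : (0:ℝ) < (q.den:ℝ) := by exact_mod_cast q.pos
    have hs' : (0:ℝ) < (s:ℝ) := by exact_mod_cast hs0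
    have hlog : Real.log q = Real.log s - Real.log q.den := by
      rw [hqeq, Real.log_div hs'.ne' hden'.ne']
    have key := hfe (Real.log s) q.den q.pos
    rw [L1 s hs0, ← Real.exp_nat_mul] at key
    rw [hlog, key]
    congr 1
    rw [neg_sub, Real.exp_sub, Real.exp_log hs', Real.exp_log hden']
    ring
  -- Step 3 : right-continuity extends to all reals
  intro x
  have hq : ∀ n : ℕ, ∃ q : ℚ, Real.exp x < q ∧ (q:ℝ) < Real.exp x + 1/(n+1) := by
    intro n
    exact exists_rat_btwn (lt_add_of_pos_right _ (by positivity))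
  choose q hq1 hq2 using hq
  have hqpos : ∀ n, (0:ℝ) < (q n : ℝ) := fun n => (Real.exp_pos x).trans (hq1 n)
  set y : ℕ → ℝ := fun n => Real.log (q n) with hy
  have hyx : ∀ n, x ≤ y n := by
    intro n
    have := Real.log_le_log (Real.exp_pos x) (hq1 n).le
    rwa [Real.log_exp] at this
  have hqlim : Tendsto (fun n => ((q n : ℝ))) atTop (nhds (Real.exp x)) := by
    apply tendsto_of_tendsto_of_tendsto_of_le_of_le (g := fun _ => Real.exp x)
      (h := fun n : ℕ => Real.exp x + 1/(n+1)) tendsto_const_nhds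
    · have : Tendsto (fun n : ℕ => 1/((n:ℝ)+1)) atTop (nhds 0) :=
        tendsto_one_div_add_atTop_nhds_zero_nat
      simpa using tendsto_const_nhds.add this
    · exact fun n => (hq1 n).le
    · exact fun n => (hq2 n).le
  have hylim : Tendsto y atTop (nhds x) := by
    have hc : ContinuousAt Real.log (Real.exp x) :=
      Real.continuousAt_log (Real.exp_pos x).ne'
    have := hc.tendsto.comp hqlim
    simpa [hy, Real.log_exp, Function.comp_def] using this
  have hylim' : Tendsto y atTop (nhdsWithin x (Set.Ici x)) := by
    rw [tendsto_nhdsWithin_iff]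
    exact ⟨hylim, Eventually.of_forall fun n => hyx n⟩
  have hF : Tendsto (fun n => F (y n)) atTop (nhds (F x)) := (hrc x).tendsto.comp hylim'
  have hGc : Continuous fun z : ℝ => Real.exp (-α * Real.exp (-z)) := by continuity
  have hG : Tendsto (fun n => Real.exp (-α * Real.exp (-(y n)))) atTop
      (nhds (Real.exp (-α * Real.exp (-x)))) := (hGc.tendsto x).comp hylim
  have heq : (fun n => F (y n)) = fun n => Real.exp (-α * Real.exp (-(y n))) := by
    funext n
    have hqn : 0 < q n := by exact_mod_cast hqpos n
    exact L2 (q n) hqn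
  rw [heq] at hF
  exact tendsto_nhds_unique hF hG
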